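/- Let a₁,…,a_n be distinct reals, ε₁,…,ε_n ∈ {-1,1}, Δᵢ(a) = εᵢ(a-aᵢ), and a ∈ ℝ with Δᵢ(a) > 0 for all i; let ξᵢ ∈ ℝ. For real variables h, p, y, π with h = π² + a p², define G = ∑_{k=0}^{n} (-1)^k σ_k h^{n-k} p^{2k}, Q₁ = ∑_{k=1}^{n} b̃_k h^{n-k} π p^{2k-1} with b̃_k = (-1)^k ∑_i (ξᵢ/Δᵢ(a)^{1/2}) σ^i_{k-1}, Q₂ = ∑_{k=1}^{n} c̃_k h^{n-k} p^{2k} with c̃_k = ((-1)^{k+1}/2)[ ∑_i (ξᵢ²/Δᵢ(a)) σ^i_{k-1} + ∑_{i≠j} (ξᵢξ_j/(Δᵢ(a)Δ_j(a))^{1/2})(σ^{ij}_{k-1} + a σ^{ij}_{k-2}) ], S₁ = Q₁ + y G, and S₂ = Q₂ + y Q₁ + (y²/2) G. Then S₁² − 2 G S₂ = ∑_{k,l=1}^{n} 𝒬_{kl} h^{2n-k-l} p^{2(k+l)}, where 𝒬_{kl} = (-1)^{k+l+1} ∑_{i=1}^n εᵢ ξᵢ² σ^i_{k-1} σ^i_{l-1}.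 -/

import Mathlib

open Polynomial

/-- For a polynomial `Q` of degree `d` written as `Q(X) = ∑_{k=0}^{d} (-1)^k σ_k X^{d-k}`,
`sig d Q k` is the coefficient `σ_k`, extended by `0` outside `0 ≤ k ≤ d`. -/
noncomputable def sig (d : ℕ) (Q : Polynomial ℝ) (k : ℤ) : ℝ :=
  if 0 ≤ k ∧ k ≤ (d : ℤ) then (-1 : ℝ) ^ k * Q.coeff (d - k.toNat) else 0

/-- `σ_k` for `P(X) = ∏ᵢ (X-aᵢ) = ∑_{k=0}^{n} (-1)^k σ_k X^{n-k}`. -/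
noncomputable def sigma (n : ℕ) (a : Fin n → ℝ) (k : ℤ) : ℝ :=
  sig n (∏ i, (X - C (a i))) k

/-- `σ^i_k` defined by `P(X)/(X-aᵢ) = ∑_{k=0}^{n-1} (-1)^k σ^i_k X^{n-1-k}`,
with `σ^i_{-1} = σ^i_n = 0`. -/
noncomputable def sigmaI (n : ℕ) (a : Fin n → ℝ) (i : Fin n) (k : ℤ) : ℝ :=
  sig (n - 1) (∏ j ∈ Finset.univ.erase i, (X - C (a j))) k

/-- `σ^{ij}_k` (for `i ≠ j`) defined by
`P(X)/((X-aᵢ)(X-a_j)) = ∑_{k=0}^{n-2} (-1)^k σ^{ij}_k X^{n-2-k}`,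
with `σ^{ij}_{-2} = σ^{ij}_{-1} = σ^{ij}_{n-1} = σ^{ij}_n = 0`. -/
noncomputable def sigmaIJ (n : ℕ) (a : Fin n → ℝ) (i j : Fin n) (k : ℤ) : ℝ :=
  sig (n - 2) (∏ l ∈ (Finset.univ.erase i).erase j, (X - C (a l))) k

private lemma coeff_hom_prod {ι : Type*} [DecidableEq ι] (s : Finset ι) (a : ι → ℝ) (x t : ℝ) :
    ∑ m ∈ Finset.range (s.card + 1),
      (∏ i ∈ s, (X - C (a i))).coeff m * x ^ m * t ^ (s.card - m) =
    ∏ i ∈ s, (x - a i * t) := by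
  induction s using Finset.induction_on with
  | empty => simp
  | insert i s hi ih =>
    rw [Finset.card_insert_of_notMem hi, Finset.prod_insert hi, Finset.prod_insert hi]
    have hdeg : (∏ j ∈ s, (X - C (a j))).natDegree = s.card := by
      rw [Polynomial.natDegree_prod_of_monic _ _ (fun j _ => monic_X_sub_C _)]
      simp
    set Q := ∏ j ∈ s, (X - C (a j)) with hQ
    have hcoeff : ∀ m, ((X - C (a i)) * Q).coeff m = (X * Q).coeff m - a i * Q.coeff m := by
      intro m; rw [sub_mul, Polynomial.coeff_sub, Polynomial.coeff_C_mul]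
    calc ∑ m ∈ Finset.range (s.card + 1 + 1), ((X - C (a i)) * Q).coeff m * x ^ m * t ^ (s.card + 1 - m)
        = (∑ m ∈ Finset.range (s.card + 1 + 1), (X * Q).coeff m * x ^ m * t ^ (s.card + 1 - m))
          - a i * ∑ m ∈ Finset.range (s.card + 1 + 1), Q.coeff m * x ^ m * t ^ (s.card + 1 - m) := by
          rw [Finset.mul_sum, ← Finset.sum_sub_distrib]
          refine Finset.sum_congr rfl fun m _ => ?_
          rw [hcoeff]; ring
      _ = x * (∑ m ∈ Finset.range (s.card + 1), Q.coeff m * x ^ m * t ^ (s.card - m))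
          - a i * t * ∑ m ∈ Finset.range (s.card + 1), Q.coeff m * x ^ m * t ^ (s.card - m) := by
          congr 1
          · rw [Finset.sum_range_succ']
            simp only [Polynomial.coeff_X_mul]
            have h0 : (X * Q).coeff 0 = 0 := by simp [Polynomial.coeff_mul_X_pow']
            rw [h0]
            simp only [zero_mul, mul_zero, pow_zero, add_zero, one_mul, zero_add]
            rw [Finset.mul_sum]
            refine Finset.sum_congr rfl fun m hm => ?_
            simp only [Finset.mem_range] at hm
            have : s.card + 1 - (m + 1) = s.card - m := by omega
            rw [this]; ring
          · rw [Finset.sum_range_succ]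
            have hz : Q.coeff (s.card + 1) = 0 := by
              apply Polynomial.coeff_eq_zero_of_natDegree_lt; omega
            rw [hz]
            simp only [zero_mul, mul_zero, add_zero]
            rw [Finset.mul_sum, Finset.mul_sum]
            refine Finset.sum_congr rfl fun m hm => ?_
            simp only [Finset.mem_range] at hm
            have : s.card + 1 - m = (s.card - m) + 1 := by omega
            rw [this, pow_succ]; ring
      _ = (x - a i * t) * ∏ j ∈ s, (x - a j * t) := by rw [ih]; ring

private lemma sig_eq (d : ℕ) (Q : Polynomial ℝ) (k : ℕ) (hk : k ≤ d) :
    sig d Q (k : ℤ) = (-1 : ℝ) ^ k * Q.coeff (d - k) := by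
  unfold sig
  rw [if_pos ⟨Int.natCast_nonneg k, by exact_mod_cast hk⟩]
  rw [zpow_natCast, Int.toNat_natCast]

private lemma sig_neg (d : ℕ) (Q : Polynomial ℝ) (k : ℤ) (hk : k < 0) : sig d Q k = 0 := by
  unfold sig; rw [if_neg]; omega

private lemma sig_big (d : ℕ) (Q : Polynomial ℝ) (k : ℤ) (hk : (d : ℤ) < k) : sig d Q k = 0 := by
  unfold sig; rw [if_neg]; omega

private lemma sig_sum {ι : Type*} [DecidableEq ι] (s : Finset ι) (a : ι → ℝ) (x t : ℝ) :
    ∑ k ∈ Finset.range (s.card + 1),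
      (-1 : ℝ) ^ k * sig s.card (∏ i ∈ s, (X - C (a i))) (k : ℤ) * x ^ (s.card - k) * t ^ k =
    ∏ i ∈ s, (x - a i * t) := by
  rw [← coeff_hom_prod s a x t, ← Finset.sum_range_reflect]
  refine Finset.sum_congr rfl fun k hk => ?_
  simp only [Finset.mem_range] at hk
  have hk' : k ≤ s.card := by omega
  have h1 : s.card + 1 - 1 - k = s.card - k := by omega
  rw [h1, sig_eq _ _ _ (Nat.sub_le _ _)]
  have h2 : s.card - (s.card - k) = k := by omega
  rw [h2]
  have hs : ((-1:ℝ)) ^ (s.card - k) * ((-1:ℝ)) ^ (s.card - k) = 1 := by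
    rw [← pow_add]; exact Even.neg_one_pow ⟨s.card - k, rfl⟩
  rw [← mul_assoc, hs, one_mul]

private lemma icc_to_range (n : ℕ) (f : ℕ → ℝ) :
    ∑ k ∈ Finset.Icc 1 n, f k = ∑ j ∈ Finset.range n, f (j + 1) := by
  rw [← Finset.Ico_add_one_right_eq_Icc, Finset.sum_Ico_eq_sum_range]
  simp [add_comm]

private lemma icc_sig₁ {ι : Type*} [DecidableEq ι] (n : ℕ) (hn : 1 ≤ n) (s : Finset ι)
    (hs : s.card = n - 1) (a : ι → ℝ) (x t : ℝ) :
    ∑ k ∈ Finset.Icc 1 n,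
      (-1 : ℝ) ^ k * sig (n-1) (∏ i ∈ s, (X - C (a i))) ((k : ℤ) - 1) * x ^ (n - k) * t ^ k =
    -t * ∏ i ∈ s, (x - a i * t) := by
  obtain ⟨m, rfl⟩ : ∃ m, n = m + 1 := ⟨n - 1, by omega⟩
  simp only [Nat.add_sub_cancel] at hs ⊢
  rw [icc_to_range]
  have key := sig_sum s a x t
  rw [hs] at key
  rw [← key, Finset.mul_sum]
  refine Finset.sum_congr rfl fun j hj => ?_
  simp only [Finset.mem_range] at hj
  have e1 : ((j + 1 : ℕ) : ℤ) - 1 = (j : ℤ) := by push_cast; ring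
  have e2 : m + 1 - (j + 1) = m - j := by omega
  rw [e1, e2, pow_succ, pow_succ]
  ring

private lemma icc_sig₁' {ι : Type*} [DecidableEq ι] (n : ℕ) (hn : 1 ≤ n) (s : Finset ι)
    (hs : s.card = n - 1) (a : ι → ℝ) (x p : ℝ) :
    ∑ k ∈ Finset.Icc 1 n,
      (-1 : ℝ) ^ k * sig (n-1) (∏ i ∈ s, (X - C (a i))) ((k : ℤ) - 1) * x ^ (n - k) * p ^ (2*k - 1) =
    -p * ∏ i ∈ s, (x - a i * p^2) := by
  obtain ⟨m, rfl⟩ : ∃ m, n = m + 1 := ⟨n - 1, by omega⟩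
  simp only [Nat.add_sub_cancel] at hs ⊢
  rw [icc_to_range]
  have key := sig_sum s a x (p^2)
  rw [hs] at key
  rw [← key, Finset.mul_sum]
  refine Finset.sum_congr rfl fun j hj => ?_
  simp only [Finset.mem_range] at hj
  have e1 : ((j + 1 : ℕ) : ℤ) - 1 = (j : ℤ) := by push_cast; ring
  have e2 : m + 1 - (j + 1) = m - j := by omega
  have e3 : 2 * (j + 1) - 1 = 2 * j + 1 := by omega
  rw [e1, e2, e3, pow_succ, pow_succ, pow_mul]
  ring

private lemma icc_sig₂ {ι : Type*} [DecidableEq ι] (n : ℕ) (hn : 2 ≤ n) (s : Finset ι)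
    (hs : s.card = n - 2) (a : ι → ℝ) (x t : ℝ) :
    ∑ k ∈ Finset.Icc 1 n,
      (-1 : ℝ) ^ (k+1) * sig (n-2) (∏ i ∈ s, (X - C (a i))) ((k : ℤ) - 1) * x ^ (n - k) * t ^ k =
    x * t * ∏ i ∈ s, (x - a i * t) := by
  obtain ⟨m, rfl⟩ : ∃ m, n = m + 2 := ⟨n - 2, by omega⟩
  simp only [Nat.add_sub_cancel] at hs ⊢
  rw [icc_to_range]
  have key := sig_sum s a x t
  rw [hs] at key
  rw [Finset.sum_range_succ]
  have hzero : sig m (∏ i ∈ s, (X - C (a i))) (((m + 1 + 1 : ℕ) : ℤ) - 1) = 0 := by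
    apply sig_big; push_cast; omega
  rw [hzero, mul_zero, zero_mul, zero_mul, add_zero, ← key, Finset.mul_sum]
  refine Finset.sum_congr rfl fun j hj => ?_
  simp only [Finset.mem_range] at hj
  have e1 : ((j + 1 : ℕ) : ℤ) - 1 = (j : ℤ) := by push_cast; ring
  have e2 : m + 2 - (j + 1) = (m - j) + 1 := by omega
  rw [e1, e2, pow_succ x (m-j), pow_succ t j, pow_succ (-1 : ℝ)]
  ring

private lemma icc_sig₃ {ι : Type*} [DecidableEq ι] (n : ℕ) (hn : 2 ≤ n) (s : Finset ι)
    (hs : s.card = n - 2) (a : ι → ℝ) (x t : ℝ) :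
    ∑ k ∈ Finset.Icc 1 n,
      (-1 : ℝ) ^ (k+1) * sig (n-2) (∏ i ∈ s, (X - C (a i))) ((k : ℤ) - 2) * x ^ (n - k) * t ^ k =
    -(t^2) * ∏ i ∈ s, (x - a i * t) := by
  obtain ⟨m, rfl⟩ : ∃ m, n = m + 2 := ⟨n - 2, by omega⟩
  simp only [Nat.add_sub_cancel] at hs ⊢
  rw [icc_to_range]
  have key := sig_sum s a x t
  rw [hs] at key
  rw [Finset.sum_range_succ']
  have hzero : sig m (∏ i ∈ s, (X - C (a i))) (((0 + 1 : ℕ) : ℤ) - 2) = 0 := by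
    apply sig_neg; norm_num
  rw [hzero, mul_zero, zero_mul, zero_mul, add_zero, ← key, Finset.mul_sum]
  refine Finset.sum_congr rfl fun j hj => ?_
  simp only [Finset.mem_range] at hj
  have e1 : ((j + 1 + 1 : ℕ) : ℤ) - 2 = (j : ℤ) := by push_cast; ring
  have e2 : m + 2 - (j + 1 + 1) = m - j := by omega
  rw [e1, e2]
  have e3 : t ^ (j + 1 + 1) = t^2 * t^j := by ring
  have e4 : (-1:ℝ) ^ (j + 1 + 1 + 1) = -(-1:ℝ) ^ j := by
    rw [pow_succ, pow_succ, pow_succ]; ring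
  rw [e3, e4]
  ring

/-- The algebraic identity
`S₁² − 2 G S₂ = ∑_{k,l=1}^{n} 𝒬_{kl} h^{2n-k-l} p^{2(k+l)}` with
`𝒬_{kl} = (-1)^{k+l+1} ∑ᵢ εᵢ ξᵢ² σ^i_{k-1} σ^i_{l-1}`, valid whenever `h = π² + a p²`. -/
theorem stmt10 (n : ℕ) (a : Fin n → ℝ) (ha : Function.Injective a)
    (ε : Fin n → ℝ) (hε : ∀ i, ε i = 1 ∨ ε i = -1)
    (A : ℝ) (hΔ : ∀ i, 0 < ε i * (A - a i))
    (ξ : Fin n → ℝ)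
    (h p y π : ℝ) (hH : h = π ^ 2 + A * p ^ 2) :
    (∑ k ∈ Finset.Icc 1 n,
        ((-1 : ℝ) ^ k * ∑ i, ξ i / (ε i * (A - a i)) ^ ((1/2) : ℝ) * sigmaI n a i ((k : ℤ) - 1)) *
          h ^ (n - k) * π * p ^ (2 * k - 1) +
      y * ∑ k ∈ Finset.range (n + 1), (-1 : ℝ) ^ k * sigma n a (k : ℤ) * h ^ (n - k) * p ^ (2 * k)) ^ 2 -
    2 * (∑ k ∈ Finset.range (n + 1), (-1 : ℝ) ^ k * sigma n a (k : ℤ) * h ^ (n - k) * p ^ (2 * k)) *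
      (∑ k ∈ Finset.Icc 1 n,
          (((-1 : ℝ) ^ (k + 1) / 2) *
            ((∑ i, ξ i ^ 2 / (ε i * (A - a i)) * sigmaI n a i ((k : ℤ) - 1)) +
              ∑ i, ∑ j ∈ Finset.univ.erase i,
                ξ i * ξ j / ((ε i * (A - a i)) * (ε j * (A - a j))) ^ ((1/2) : ℝ) *
                  (sigmaIJ n a i j ((k : ℤ) - 1) + A * sigmaIJ n a i j ((k : ℤ) - 2)))) *
            h ^ (n - k) * p ^ (2 * k) +
        y * ∑ k ∈ Finset.Icc 1 n,
          ((-1 : ℝ) ^ k * ∑ i, ξ i / (ε i * (A - a i)) ^ ((1/2) : ℝ) * sigmaI n a i ((k : ℤ) - 1)) *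
            h ^ (n - k) * π * p ^ (2 * k - 1) +
        y ^ 2 / 2 *
          ∑ k ∈ Finset.range (n + 1), (-1 : ℝ) ^ k * sigma n a (k : ℤ) * h ^ (n - k) * p ^ (2 * k)) =
    ∑ k ∈ Finset.Icc 1 n, ∑ l ∈ Finset.Icc 1 n,
      ((-1 : ℝ) ^ (k + l + 1) * ∑ i, ε i * ξ i ^ 2 * sigmaI n a i ((k : ℤ) - 1) * sigmaI n a i ((l : ℤ) - 1)) *
        h ^ (2 * n - k - l) * p ^ (2 * (k + l)) := by
  classical
  -- abbreviations (all plain terms, no set)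
  have hD0 : ∀ i, ε i * (A - a i) ≠ 0 := fun i => ne_of_gt (hΔ i)
  -- Pp i, PP i j, Gv
  -- G sum
  have hGsum : ∑ k ∈ Finset.range (n + 1), (-1 : ℝ) ^ k * sigma n a (k : ℤ) * h ^ (n - k) * p ^ (2 * k)
      = ∏ i, (h - a i * p ^ 2) := by
    have key := sig_sum (Finset.univ : Finset (Fin n)) a h (p ^ 2)
    simp only [Finset.card_univ, Fintype.card_fin] at key
    rw [← key]
    refine Finset.sum_congr rfl fun k _ => ?_
    rw [pow_mul]
    rfl
  -- per-i sums
  have hI : ∀ i : Fin n, ∑ k ∈ Finset.Icc 1 n,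
      (-1 : ℝ) ^ k * sigmaI n a i ((k : ℤ) - 1) * h ^ (n - k) * p ^ (2 * k)
      = -(p ^ 2) * ∏ j ∈ Finset.univ.erase i, (h - a j * p ^ 2) := by
    intro i
    have hcard : (Finset.univ.erase i).card = n - 1 := by
      rw [Finset.card_erase_of_mem (Finset.mem_univ i), Finset.card_univ, Fintype.card_fin]
    have key := icc_sig₁ n i.pos (Finset.univ.erase i) hcard a h (p ^ 2)
    rw [← key]
    refine Finset.sum_congr rfl fun k _ => ?_
    rw [pow_mul]
    rfl
  have hI' : ∀ i : Fin n, ∑ k ∈ Finset.Icc 1 n,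
      (-1 : ℝ) ^ k * sigmaI n a i ((k : ℤ) - 1) * h ^ (n - k) * p ^ (2 * k - 1)
      = -p * ∏ j ∈ Finset.univ.erase i, (h - a j * p ^ 2) := by
    intro i
    have hcard : (Finset.univ.erase i).card = n - 1 := by
      rw [Finset.card_erase_of_mem (Finset.mem_univ i), Finset.card_univ, Fintype.card_fin]
    exact icc_sig₁' n i.pos (Finset.univ.erase i) hcard a h p
  have hIJ : ∀ i : Fin n, ∀ j ∈ Finset.univ.erase i, ∑ k ∈ Finset.Icc 1 n,
      (-1 : ℝ) ^ (k + 1) * (sigmaIJ n a i j ((k : ℤ) - 1) + A * sigmaIJ n a i j ((k : ℤ) - 2))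
        * h ^ (n - k) * p ^ (2 * k)
      = (π ^ 2 * p ^ 2) * ∏ l ∈ (Finset.univ.erase i).erase j, (h - a l * p ^ 2) := by
    intro i j hj
    have hji : j ≠ i := (Finset.mem_erase.mp hj).1
    have hn2 : 2 ≤ n := by
      have h1 := i.2; have h2 := j.2
      have h3 : (i : ℕ) ≠ (j : ℕ) := fun hc => hji (Fin.ext hc.symm)
      omega
    have hcard : ((Finset.univ.erase i).erase j).card = n - 2 := by
      rw [Finset.card_erase_of_mem hj, Finset.card_erase_of_mem (Finset.mem_univ i),
        Finset.card_univ, Fintype.card_fin]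
      omega
    have k1 := icc_sig₂ n hn2 ((Finset.univ.erase i).erase j) hcard a h (p ^ 2)
    have k2 := icc_sig₃ n hn2 ((Finset.univ.erase i).erase j) hcard a h (p ^ 2)
    have split : ∑ k ∈ Finset.Icc 1 n,
        (-1 : ℝ) ^ (k + 1) * (sigmaIJ n a i j ((k : ℤ) - 1) + A * sigmaIJ n a i j ((k : ℤ) - 2))
          * h ^ (n - k) * p ^ (2 * k)
        = (∑ k ∈ Finset.Icc 1 n, (-1 : ℝ) ^ (k + 1) * sigmaIJ n a i j ((k : ℤ) - 1) * h ^ (n - k) * p ^ (2 * k))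
          + A * ∑ k ∈ Finset.Icc 1 n, (-1 : ℝ) ^ (k + 1) * sigmaIJ n a i j ((k : ℤ) - 2) * h ^ (n - k) * p ^ (2 * k) := by
      rw [Finset.mul_sum, ← Finset.sum_add_distrib]
      refine Finset.sum_congr rfl fun k _ => ?_
      ring
    have e1 : ∑ k ∈ Finset.Icc 1 n, (-1 : ℝ) ^ (k + 1) * sigmaIJ n a i j ((k : ℤ) - 1) * h ^ (n - k) * p ^ (2 * k)
        = h * p ^ 2 * ∏ l ∈ (Finset.univ.erase i).erase j, (h - a l * p ^ 2) := by
      rw [← k1]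
      refine Finset.sum_congr rfl fun k _ => ?_
      rw [pow_mul]; rfl
    have e2 : ∑ k ∈ Finset.Icc 1 n, (-1 : ℝ) ^ (k + 1) * sigmaIJ n a i j ((k : ℤ) - 2) * h ^ (n - k) * p ^ (2 * k)
        = -((p ^ 2) ^ 2) * ∏ l ∈ (Finset.univ.erase i).erase j, (h - a l * p ^ 2) := by
      rw [← k2]
      refine Finset.sum_congr rfl fun k _ => ?_
      rw [pow_mul]; rfl
    rw [split, e1, e2]
    rw [hH]; ring
  -- negative-sign variant of hI
  have hIneg : ∀ i : Fin n, ∑ k ∈ Finset.Icc 1 n,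
      (-1 : ℝ) ^ (k + 1) * sigmaI n a i ((k : ℤ) - 1) * h ^ (n - k) * p ^ (2 * k)
      = p ^ 2 * ∏ j ∈ Finset.univ.erase i, (h - a j * p ^ 2) := by
    intro i
    have step : ∑ k ∈ Finset.Icc 1 n,
        (-1 : ℝ) ^ (k + 1) * sigmaI n a i ((k : ℤ) - 1) * h ^ (n - k) * p ^ (2 * k)
        = -∑ k ∈ Finset.Icc 1 n, (-1 : ℝ) ^ k * sigmaI n a i ((k : ℤ) - 1) * h ^ (n - k) * p ^ (2 * k) := by
      rw [← Finset.sum_neg_distrib]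
      refine Finset.sum_congr rfl fun k _ => ?_
      rw [pow_succ]
      ring
    rw [step, hI i]
    ring
  -- the Q1 sum
  have hQ1 : (∑ k ∈ Finset.Icc 1 n,
        ((-1 : ℝ) ^ k * ∑ i, ξ i / (ε i * (A - a i)) ^ ((1/2) : ℝ) * sigmaI n a i ((k : ℤ) - 1)) *
          h ^ (n - k) * π * p ^ (2 * k - 1))
      = -(π * p) * ∑ i, ξ i / (ε i * (A - a i)) ^ ((1/2) : ℝ) *
          ∏ j ∈ Finset.univ.erase i, (h - a j * p ^ 2) := by
    calc (∑ k ∈ Finset.Icc 1 n,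
        ((-1 : ℝ) ^ k * ∑ i, ξ i / (ε i * (A - a i)) ^ ((1/2) : ℝ) * sigmaI n a i ((k : ℤ) - 1)) *
          h ^ (n - k) * π * p ^ (2 * k - 1))
        = ∑ k ∈ Finset.Icc 1 n, ∑ i, (ξ i / (ε i * (A - a i)) ^ ((1/2) : ℝ) * π) *
            ((-1 : ℝ) ^ k * sigmaI n a i ((k : ℤ) - 1) * h ^ (n - k) * p ^ (2 * k - 1)) := by
          refine Finset.sum_congr rfl fun k _ => ?_
          rw [Finset.mul_sum, Finset.sum_mul, Finset.sum_mul, Finset.sum_mul]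
          refine Finset.sum_congr rfl fun i _ => ?_
          ring
      _ = ∑ i, ∑ k ∈ Finset.Icc 1 n, (ξ i / (ε i * (A - a i)) ^ ((1/2) : ℝ) * π) *
            ((-1 : ℝ) ^ k * sigmaI n a i ((k : ℤ) - 1) * h ^ (n - k) * p ^ (2 * k - 1)) :=
          Finset.sum_comm
      _ = ∑ i, (ξ i / (ε i * (A - a i)) ^ ((1/2) : ℝ) * π) *
            (-p * ∏ j ∈ Finset.univ.erase i, (h - a j * p ^ 2)) := by
          refine Finset.sum_congr rfl fun i _ => ?_
          rw [← Finset.mul_sum, hI' i]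
      _ = -(π * p) * ∑ i, ξ i / (ε i * (A - a i)) ^ ((1/2) : ℝ) *
            ∏ j ∈ Finset.univ.erase i, (h - a j * p ^ 2) := by
          rw [Finset.mul_sum]
          refine Finset.sum_congr rfl fun i _ => ?_
          ring
  -- the Q2 sum
  have hQ2 : (∑ k ∈ Finset.Icc 1 n,
          (((-1 : ℝ) ^ (k + 1) / 2) *
            ((∑ i, ξ i ^ 2 / (ε i * (A - a i)) * sigmaI n a i ((k : ℤ) - 1)) +
              ∑ i, ∑ j ∈ Finset.univ.erase i,
                ξ i * ξ j / ((ε i * (A - a i)) * (ε j * (A - a j))) ^ ((1/2) : ℝ) *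
                  (sigmaIJ n a i j ((k : ℤ) - 1) + A * sigmaIJ n a i j ((k : ℤ) - 2)))) *
            h ^ (n - k) * p ^ (2 * k))
      = (∑ i, ξ i ^ 2 / (ε i * (A - a i)) / 2 *
            (p ^ 2 * ∏ j ∈ Finset.univ.erase i, (h - a j * p ^ 2))) +
        ∑ i, ∑ j ∈ Finset.univ.erase i,
          ξ i * ξ j / ((ε i * (A - a i)) * (ε j * (A - a j))) ^ ((1/2) : ℝ) / 2 *
            (π ^ 2 * p ^ 2 * ∏ l ∈ (Finset.univ.erase i).erase j, (h - a l * p ^ 2)) := by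
    calc (∑ k ∈ Finset.Icc 1 n,
          (((-1 : ℝ) ^ (k + 1) / 2) *
            ((∑ i, ξ i ^ 2 / (ε i * (A - a i)) * sigmaI n a i ((k : ℤ) - 1)) +
              ∑ i, ∑ j ∈ Finset.univ.erase i,
                ξ i * ξ j / ((ε i * (A - a i)) * (ε j * (A - a j))) ^ ((1/2) : ℝ) *
                  (sigmaIJ n a i j ((k : ℤ) - 1) + A * sigmaIJ n a i j ((k : ℤ) - 2)))) *
            h ^ (n - k) * p ^ (2 * k))
        = ∑ k ∈ Finset.Icc 1 n,
            ((∑ i, ξ i ^ 2 / (ε i * (A - a i)) / 2 *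
              ((-1 : ℝ) ^ (k + 1) * sigmaI n a i ((k : ℤ) - 1) * h ^ (n - k) * p ^ (2 * k))) +
             ∑ i, ∑ j ∈ Finset.univ.erase i,
               ξ i * ξ j / ((ε i * (A - a i)) * (ε j * (A - a j))) ^ ((1/2) : ℝ) / 2 *
                 ((-1 : ℝ) ^ (k + 1) *
                   (sigmaIJ n a i j ((k : ℤ) - 1) + A * sigmaIJ n a i j ((k : ℤ) - 2)) *
                   h ^ (n - k) * p ^ (2 * k))) := by
          refine Finset.sum_congr rfl fun k _ => ?_
          rw [mul_add, add_mul, add_mul]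
          congr 1
          · rw [Finset.mul_sum, Finset.sum_mul, Finset.sum_mul]
            refine Finset.sum_congr rfl fun i _ => ?_
            ring
          · rw [Finset.mul_sum, Finset.sum_mul, Finset.sum_mul]
            refine Finset.sum_congr rfl fun i _ => ?_
            rw [Finset.mul_sum, Finset.sum_mul, Finset.sum_mul]
            refine Finset.sum_congr rfl fun j _ => ?_
            ring
      _ = (∑ k ∈ Finset.Icc 1 n, ∑ i, ξ i ^ 2 / (ε i * (A - a i)) / 2 *
              ((-1 : ℝ) ^ (k + 1) * sigmaI n a i ((k : ℤ) - 1) * h ^ (n - k) * p ^ (2 * k))) +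
          ∑ k ∈ Finset.Icc 1 n, ∑ i, ∑ j ∈ Finset.univ.erase i,
              ξ i * ξ j / ((ε i * (A - a i)) * (ε j * (A - a j))) ^ ((1/2) : ℝ) / 2 *
                ((-1 : ℝ) ^ (k + 1) *
                  (sigmaIJ n a i j ((k : ℤ) - 1) + A * sigmaIJ n a i j ((k : ℤ) - 2)) *
                  h ^ (n - k) * p ^ (2 * k)) := Finset.sum_add_distrib
      _ = (∑ i, ξ i ^ 2 / (ε i * (A - a i)) / 2 *
            (p ^ 2 * ∏ j ∈ Finset.univ.erase i, (h - a j * p ^ 2))) +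
          ∑ i, ∑ j ∈ Finset.univ.erase i,
            ξ i * ξ j / ((ε i * (A - a i)) * (ε j * (A - a j))) ^ ((1/2) : ℝ) / 2 *
              (π ^ 2 * p ^ 2 * ∏ l ∈ (Finset.univ.erase i).erase j, (h - a l * p ^ 2)) := by
          congr 1
          · rw [Finset.sum_comm]
            refine Finset.sum_congr rfl fun i _ => ?_
            rw [← Finset.mul_sum, hIneg i]
          · rw [Finset.sum_comm]
            refine Finset.sum_congr rfl fun i _ => ?_
            rw [Finset.sum_comm]
            refine Finset.sum_congr rfl fun j hj => ?_
            rw [← Finset.mul_sum, hIJ i j hj]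
  -- the RHS double sum
  have hRHS : (∑ k ∈ Finset.Icc 1 n, ∑ l ∈ Finset.Icc 1 n,
      ((-1 : ℝ) ^ (k + l + 1) * ∑ i, ε i * ξ i ^ 2 * sigmaI n a i ((k : ℤ) - 1) * sigmaI n a i ((l : ℤ) - 1)) *
        h ^ (2 * n - k - l) * p ^ (2 * (k + l)))
      = ∑ i, -(ε i * ξ i ^ 2) *
          ((-(p ^ 2) * ∏ j ∈ Finset.univ.erase i, (h - a j * p ^ 2)) *
           (-(p ^ 2) * ∏ j ∈ Finset.univ.erase i, (h - a j * p ^ 2))) := by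
    calc (∑ k ∈ Finset.Icc 1 n, ∑ l ∈ Finset.Icc 1 n,
      ((-1 : ℝ) ^ (k + l + 1) * ∑ i, ε i * ξ i ^ 2 * sigmaI n a i ((k : ℤ) - 1) * sigmaI n a i ((l : ℤ) - 1)) *
        h ^ (2 * n - k - l) * p ^ (2 * (k + l)))
        = ∑ k ∈ Finset.Icc 1 n, ∑ l ∈ Finset.Icc 1 n, ∑ i, -(ε i * ξ i ^ 2) *
            (((-1 : ℝ) ^ k * sigmaI n a i ((k : ℤ) - 1) * h ^ (n - k) * p ^ (2 * k)) *
             ((-1 : ℝ) ^ l * sigmaI n a i ((l : ℤ) - 1) * h ^ (n - l) * p ^ (2 * l))) := by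
          refine Finset.sum_congr rfl fun k hk => ?_
          refine Finset.sum_congr rfl fun l hl => ?_
          rw [Finset.mem_Icc] at hk hl
          rw [Finset.mul_sum, Finset.sum_mul, Finset.sum_mul]
          refine Finset.sum_congr rfl fun i _ => ?_
          have e1 : 2 * n - k - l = (n - k) + (n - l) := by omega
          have e2 : 2 * (k + l) = 2 * k + 2 * l := by ring
          have e3 : (-1 : ℝ) ^ (k + l + 1) = -((-1 : ℝ) ^ k * (-1 : ℝ) ^ l) := by
            rw [pow_succ, pow_add]; ring
          rw [e1, e2, e3, pow_add, pow_add]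
          ring
      _ = ∑ i, ∑ k ∈ Finset.Icc 1 n, ∑ l ∈ Finset.Icc 1 n, -(ε i * ξ i ^ 2) *
            (((-1 : ℝ) ^ k * sigmaI n a i ((k : ℤ) - 1) * h ^ (n - k) * p ^ (2 * k)) *
             ((-1 : ℝ) ^ l * sigmaI n a i ((l : ℤ) - 1) * h ^ (n - l) * p ^ (2 * l))) := by
          exact (Finset.sum_congr rfl fun k _ => Finset.sum_comm).trans Finset.sum_comm
      _ = ∑ i, -(ε i * ξ i ^ 2) *
          ((-(p ^ 2) * ∏ j ∈ Finset.univ.erase i, (h - a j * p ^ 2)) *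
           (-(p ^ 2) * ∏ j ∈ Finset.univ.erase i, (h - a j * p ^ 2))) := by
          refine Finset.sum_congr rfl fun i _ => ?_
          rw [← hI i]
          rw [Finset.sum_mul_sum]
          rw [Finset.mul_sum]
          refine Finset.sum_congr rfl fun k _ => ?_
          rw [Finset.mul_sum]
  rw [hGsum, hQ1, hQ2, hRHS]
  -- shape normalizations
  have hA1 : (∑ i, ξ i ^ 2 / (ε i * (A - a i)) / 2 *
        (p ^ 2 * ∏ j ∈ Finset.univ.erase i, (h - a j * p ^ 2)))
      = p ^ 2 / 2 * ∑ i, ξ i ^ 2 / (ε i * (A - a i)) *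
          ∏ j ∈ Finset.univ.erase i, (h - a j * p ^ 2) := by
    rw [Finset.mul_sum]
    exact Finset.sum_congr rfl fun i _ => by ring
  have hA2 : (∑ i, ∑ j ∈ Finset.univ.erase i,
        ξ i * ξ j / ((ε i * (A - a i)) * (ε j * (A - a j))) ^ ((1/2) : ℝ) / 2 *
          (π ^ 2 * p ^ 2 * ∏ l ∈ (Finset.univ.erase i).erase j, (h - a l * p ^ 2)))
      = π ^ 2 * p ^ 2 / 2 * ∑ i, ∑ j ∈ Finset.univ.erase i,
          ξ i * ξ j / ((ε i * (A - a i)) * (ε j * (A - a j))) ^ ((1/2) : ℝ) *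
            ∏ l ∈ (Finset.univ.erase i).erase j, (h - a l * p ^ 2) := by
    rw [Finset.mul_sum]
    refine Finset.sum_congr rfl fun i _ => ?_
    rw [Finset.mul_sum]
    exact Finset.sum_congr rfl fun j _ => by ring
  have hA3 : (∑ i, -(ε i * ξ i ^ 2) *
        ((-(p ^ 2) * ∏ j ∈ Finset.univ.erase i, (h - a j * p ^ 2)) *
         (-(p ^ 2) * ∏ j ∈ Finset.univ.erase i, (h - a j * p ^ 2))))
      = -(p ^ 4) * ∑ i, ε i * ξ i ^ 2 *
          (∏ j ∈ Finset.univ.erase i, (h - a j * p ^ 2)) ^ 2 := by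
    rw [Finset.mul_sum]
    exact Finset.sum_congr rfl fun i _ => by ring
  rw [hA1, hA2, hA3]
  -- product factorizations
  have hGfac : ∀ i : Fin n, (∏ i, (h - a i * p ^ 2))
      = (h - a i * p ^ 2) * ∏ j ∈ Finset.univ.erase i, (h - a j * p ^ 2) :=
    fun i => (Finset.mul_prod_erase Finset.univ _ (Finset.mem_univ i)).symm
  have hPPfac : ∀ i : Fin n, ∀ j ∈ Finset.univ.erase i,
      (∏ i, (h - a i * p ^ 2)) * ∏ l ∈ (Finset.univ.erase i).erase j, (h - a l * p ^ 2)
      = (∏ l ∈ Finset.univ.erase i, (h - a l * p ^ 2)) *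
        (∏ l ∈ Finset.univ.erase j, (h - a l * p ^ 2)) := by
    intro i j hj
    have hji : j ≠ i := (Finset.mem_erase.mp hj).1
    have hi : i ∈ Finset.univ.erase j := Finset.mem_erase.mpr ⟨hji.symm, Finset.mem_univ i⟩
    have e1 : (∏ l ∈ Finset.univ.erase i, (h - a l * p ^ 2))
        = (h - a j * p ^ 2) * ∏ l ∈ (Finset.univ.erase i).erase j, (h - a l * p ^ 2) :=
      (Finset.mul_prod_erase (Finset.univ.erase i) _ hj).symm
    have e2 : (∏ l ∈ Finset.univ.erase j, (h - a l * p ^ 2))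
        = (h - a i * p ^ 2) * ∏ l ∈ (Finset.univ.erase i).erase j, (h - a l * p ^ 2) := by
      rw [← Finset.mul_prod_erase (Finset.univ.erase j) _ hi, Finset.erase_right_comm]
    rw [hGfac i, e1, e2]
    ring
  have hhalf : ∀ i : Fin n, (ε i * (A - a i)) ^ ((1/2) : ℝ) * (ε i * (A - a i)) ^ ((1/2) : ℝ)
      = ε i * (A - a i) := fun i => by
    rw [← Real.rpow_add (hΔ i)]
    norm_num
  -- square of the Q1 sum
  have hs1sq : (∑ i, ξ i / (ε i * (A - a i)) ^ ((1/2) : ℝ) *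
        ∏ j ∈ Finset.univ.erase i, (h - a j * p ^ 2)) *
      (∑ i, ξ i / (ε i * (A - a i)) ^ ((1/2) : ℝ) *
        ∏ j ∈ Finset.univ.erase i, (h - a j * p ^ 2))
      = (∑ i, ξ i ^ 2 / (ε i * (A - a i)) *
          (∏ j ∈ Finset.univ.erase i, (h - a j * p ^ 2)) ^ 2)
        + (∏ i, (h - a i * p ^ 2)) * ∑ i, ∑ j ∈ Finset.univ.erase i,
            ξ i * ξ j / ((ε i * (A - a i)) * (ε j * (A - a j))) ^ ((1/2) : ℝ) *
              ∏ l ∈ (Finset.univ.erase i).erase j, (h - a l * p ^ 2) := by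
    rw [Finset.sum_mul_sum]
    calc (∑ i, ∑ j, (ξ i / (ε i * (A - a i)) ^ ((1/2) : ℝ) *
            ∏ l ∈ Finset.univ.erase i, (h - a l * p ^ 2)) *
          (ξ j / (ε j * (A - a j)) ^ ((1/2) : ℝ) *
            ∏ l ∈ Finset.univ.erase j, (h - a l * p ^ 2)))
        = ∑ i, ((ξ i / (ε i * (A - a i)) ^ ((1/2) : ℝ) *
              ∏ l ∈ Finset.univ.erase i, (h - a l * p ^ 2)) *
            (ξ i / (ε i * (A - a i)) ^ ((1/2) : ℝ) *
              ∏ l ∈ Finset.univ.erase i, (h - a l * p ^ 2))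
            + ∑ j ∈ Finset.univ.erase i,
              (ξ i / (ε i * (A - a i)) ^ ((1/2) : ℝ) *
                ∏ l ∈ Finset.univ.erase i, (h - a l * p ^ 2)) *
              (ξ j / (ε j * (A - a j)) ^ ((1/2) : ℝ) *
                ∏ l ∈ Finset.univ.erase j, (h - a l * p ^ 2))) :=
          Finset.sum_congr rfl fun i _ =>
            (Finset.add_sum_erase Finset.univ _ (Finset.mem_univ i)).symm
      _ = ∑ i, (ξ i ^ 2 / (ε i * (A - a i)) *
            (∏ j ∈ Finset.univ.erase i, (h - a j * p ^ 2)) ^ 2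
            + ∑ j ∈ Finset.univ.erase i,
              ξ i * ξ j / ((ε i * (A - a i)) * (ε j * (A - a j))) ^ ((1/2) : ℝ) *
                ((∏ i, (h - a i * p ^ 2)) *
                 ∏ l ∈ (Finset.univ.erase i).erase j, (h - a l * p ^ 2))) := by
          refine Finset.sum_congr rfl fun i _ => ?_
          congr 1
          · have hd : ξ i ^ 2 / (ε i * (A - a i))
                = ξ i ^ 2 / ((ε i * (A - a i)) ^ ((1/2) : ℝ) * (ε i * (A - a i)) ^ ((1/2) : ℝ)) := by
              rw [hhalf i]
            rw [hd]
            ring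
          · refine Finset.sum_congr rfl fun j hj => ?_
            rw [hPPfac i j hj, Real.mul_rpow (hΔ i).le (hΔ j).le]
            ring
      _ = (∑ i, ξ i ^ 2 / (ε i * (A - a i)) *
            (∏ j ∈ Finset.univ.erase i, (h - a j * p ^ 2)) ^ 2)
          + (∏ i, (h - a i * p ^ 2)) * ∑ i, ∑ j ∈ Finset.univ.erase i,
              ξ i * ξ j / ((ε i * (A - a i)) * (ε j * (A - a j))) ^ ((1/2) : ℝ) *
                ∏ l ∈ (Finset.univ.erase i).erase j, (h - a l * p ^ 2) := by
          rw [Finset.sum_add_distrib]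
          congr 1
          rw [Finset.mul_sum]
          refine Finset.sum_congr rfl fun i _ => ?_
          rw [Finset.mul_sum]
          exact Finset.sum_congr rfl fun j _ => by ring
  -- the diagonal identity
  have hmain : π ^ 2 * p ^ 2 * (∑ i, ξ i ^ 2 / (ε i * (A - a i)) *
        (∏ j ∈ Finset.univ.erase i, (h - a j * p ^ 2)) ^ 2)
      - p ^ 2 * ((∏ i, (h - a i * p ^ 2)) * ∑ i, ξ i ^ 2 / (ε i * (A - a i)) *
          ∏ j ∈ Finset.univ.erase i, (h - a j * p ^ 2))
      + p ^ 4 * (∑ i, ε i * ξ i ^ 2 *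
          (∏ j ∈ Finset.univ.erase i, (h - a j * p ^ 2)) ^ 2) = 0 := by
    have expand : π ^ 2 * p ^ 2 * (∑ i, ξ i ^ 2 / (ε i * (A - a i)) *
          (∏ j ∈ Finset.univ.erase i, (h - a j * p ^ 2)) ^ 2)
        - p ^ 2 * ((∏ i, (h - a i * p ^ 2)) * ∑ i, ξ i ^ 2 / (ε i * (A - a i)) *
            ∏ j ∈ Finset.univ.erase i, (h - a j * p ^ 2))
        + p ^ 4 * (∑ i, ε i * ξ i ^ 2 *
            (∏ j ∈ Finset.univ.erase i, (h - a j * p ^ 2)) ^ 2)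
        = ∑ i, (π ^ 2 * p ^ 2 * (ξ i ^ 2 / (ε i * (A - a i)) *
              (∏ j ∈ Finset.univ.erase i, (h - a j * p ^ 2)) ^ 2)
            - p ^ 2 * ((∏ i', (h - a i' * p ^ 2)) * (ξ i ^ 2 / (ε i * (A - a i)) *
                ∏ j ∈ Finset.univ.erase i, (h - a j * p ^ 2)))
            + p ^ 4 * (ε i * ξ i ^ 2 *
                (∏ j ∈ Finset.univ.erase i, (h - a j * p ^ 2)) ^ 2)) := by
      simp only [Finset.mul_sum]
      rw [← Finset.sum_sub_distrib, ← Finset.sum_add_distrib]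
    rw [expand]
    refine Finset.sum_eq_zero fun i _ => ?_
    rw [hGfac i, hH]
    have hne : A - a i ≠ 0 := by
      intro hc
      have hpos := hΔ i
      rw [hc, mul_zero] at hpos
      exact lt_irrefl 0 hpos
    have hne2 : a i - A ≠ 0 := fun hc => hne (by linarith [sub_eq_zero.mp hc])
    rcases hε i with h1 | h1 <;> rw [h1] <;> field_simp <;> ring
  linear_combination (π ^ 2 * p ^ 2) * hs1sq + hmain
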